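/- Let A : X → 2^X be a monotone linear relation. For any x, y ∈ dom A, the set {⟨y, x*⟩ : x* ∈ Ax} is a singleton. -/

import Mathlib

/-- For a monotone linear relation and x, y in its domain, {⟨y, x*⟩ : x* ∈ Ax} is a singleton. -/
theorem monotone_linear_relation_inner_singleton
    {X : Type*} [NormedAddCommGroup X] [InnerProductSpace ℝ X] [CompleteSpace X]
    (A : X → Set X)
    (hlin : ∃ G : Submodule ℝ (X × X), ∀ x y, y ∈ A x ↔ (x, y) ∈ G)
    (hmono : ∀ x x' y y', x' ∈ A x → y' ∈ A y → (0:ℝ) ≤ inner ℝ (x - y) (x' - y'))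
    (x y : X) (hx : (A x).Nonempty) (hy : (A y).Nonempty) :
    ∃ r : ℝ, {r' : ℝ | ∃ x' ∈ A x, r' = inner ℝ y x'} = {r} := by
  obtain ⟨G, hG⟩ := hlin
  obtain ⟨xs, hxs⟩ := hx
  obtain ⟨ys, hys⟩ := hy
  -- key: any two elements of A x have equal inner product with y
  have key : ∀ x' ∈ A x, (inner ℝ y x' : ℝ) = inner ℝ y xs := by
    intro x' hx'
    -- z := x' - xs ∈ A 0
    have hz : (x' - xs) ∈ A 0 := by
      rw [hG]
      have h1 : ((x, x') : X × X) ∈ G := (hG x x').mp hx'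
      have h2 : ((x, xs) : X × X) ∈ G := (hG x xs).mp hxs
      have := G.sub_mem h1 h2
      simpa using this
    -- for each t, t • ys ∈ A (t • y)
    have hty : ∀ t : ℝ, (t • ys) ∈ A (t • y) := by
      intro t
      rw [hG]
      have h1 : ((y, ys) : X × X) ∈ G := (hG y ys).mp hys
      simpa [Prod.smul_mk] using G.smul_mem t h1
    set c : ℝ := inner ℝ y (x' - xs) with hc
    set d : ℝ := inner ℝ y ys with hd
    have hineq : ∀ t : ℝ, 0 ≤ -(t * c) + t^2 * d := by
      intro t
      have := hmono 0 (x' - xs) (t • y) (t • ys) hz (hty t)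
      have hexp : (inner ℝ ((0:X) - t • y) ((x' - xs) - t • ys) : ℝ)
          = -(t * c) + t^2 * d := by
        simp [inner_sub_left, inner_sub_right, real_inner_smul_left, real_inner_smul_right,
          hc, hd]
        ring
      rw [hexp] at this
      linarith
    have hc0 : c = 0 := by
      by_contra h
      have h1 := hineq (c / (|d| + 1))
      have habs : d ≤ |d| := le_abs_self d
      have hpos : (0:ℝ) < |d| + 1 := by positivity
      have hcc : 0 < c^2 := by positivity
      have htc : c / (|d| + 1) * (|d| + 1) = c := div_mul_cancel₀ c hpos.ne'
      have ht2 : 0 < (c / (|d| + 1))^2 := by positivity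
      have heq : c / (|d| + 1) * c = (c / (|d| + 1))^2 * (|d| + 1) := by
        field_simp
      rw [heq] at h1
      nlinarith [mul_pos ht2 (show (0:ℝ) < |d| + 1 - d by linarith)]
    have : (inner ℝ y x' : ℝ) - inner ℝ y xs = 0 := by
      rw [← inner_sub_right]; exact hc0
    linarith
  refine ⟨inner ℝ y xs, ?_⟩
  ext r'
  simp only [Set.mem_setOf_eq, Set.mem_singleton_iff]
  constructor
  · rintro ⟨x', hx', rfl⟩
    exact key x' hx'
  · rintro rfl
    exact ⟨xs, hxs, rfl⟩
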